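/- arXiv:2003.10574 — 2 statements merged into one kernel-verified Lean document; each statement's English description precedes it below -/
import Mathlib

section
/- For the path P_n on n ≥ 1 vertices, the minimum size of a nonempty CCD subset of V(P_n) equals ⌈n/3⌉. -/
open Finset

variable {V : Type*} [Fintype V] [DecidableEq V]

/-- Number of neighbours of `v` inside the set `S`. -/
def nbrsIn (G : SimpleGraph V) [DecidableRel G.Adj] (S : Finset V) (v : V) : ℕ :=
  (S.filter (fun u => G.Adj v u)).card

/-- `H` is complementary component dominant (CCD). -/
def CCD (G : SimpleGraph V) [DecidableRel G.Adj] (H : Finset V) : Prop :=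
  (∀ x y, G.Adj x y → x ∈ H → y ∈ H → nbrsIn G Hᶜ x = nbrsIn G Hᶜ y) ∧
  (∀ u v, G.Adj u v → u ∉ H → v ∉ H → nbrsIn G H u = nbrsIn G H v)

/-- The path graph on `n` vertices `0, 1, …, n-1`. -/
def pathG (n : ℕ) : SimpleGraph (Fin n) where
  Adj i j := i.val + 1 = j.val ∨ j.val + 1 = i.val
  symm := by constructor; intro i j h; tauto
  loopless := by constructor; intro i h; rcases h with h | h <;> omega

instance (n : ℕ) : DecidableRel (pathG n).Adj :=
  fun i j => inferInstanceAs (Decidable (i.val + 1 = j.val ∨ j.val + 1 = i.val))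

lemma pathG_adj {n : ℕ} (i j : Fin n) :
    (pathG n).Adj i j ↔ (i.val + 1 = j.val ∨ j.val + 1 = i.val) := Iff.rfl

/-- The candidate minimum CCD set. -/
def goodSet (n : ℕ) : Finset (Fin n) :=
  univ.filter (fun i => i.val % 3 = 1 ∨ (n % 3 = 1 ∧ i.val = n - 1))

lemma mem_goodSet {n : ℕ} (i : Fin n) :
    i ∈ goodSet n ↔ (i.val % 3 = 1 ∨ (n % 3 = 1 ∧ i.val = n - 1)) := by
  simp [goodSet]

lemma aux_count : ∀ m, ((Finset.range m).filter (fun i => i % 3 = 1)).card = (m + 1) / 3 := by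
  intro m
  induction m with
  | zero => simp
  | succ k ih =>
    rw [Finset.range_add_one, Finset.filter_insert]
    by_cases h : k % 3 = 1
    · rw [if_pos h, Finset.card_insert_of_notMem (by simp)]
      omega
    · rw [if_neg h]
      omega

lemma card_filter_fin (n : ℕ) (P : ℕ → Prop) [DecidablePred P] :
    (univ.filter (fun i : Fin n => P i.val)).card = ((Finset.range n).filter P).card := by
  rw [Finset.card_filter, Finset.card_filter]
  exact Fin.sum_univ_eq_sum_range (fun i => if P i then 1 else 0) n

lemma goodSet_card {n : ℕ} (hn : 1 ≤ n) : (goodSet n).card = (n + 2) / 3 := by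
  unfold goodSet
  rw [Finset.filter_or, Finset.card_union_of_disjoint]
  · have h1 : (univ.filter (fun i : Fin n => i.val % 3 = 1)).card = (n + 1) / 3 := by
      rw [card_filter_fin n (fun i => i % 3 = 1)]
      exact aux_count n
    by_cases h : n % 3 = 1
    · have h2 : (univ.filter (fun i : Fin n => n % 3 = 1 ∧ i.val = n - 1))
          = {(⟨n - 1, by omega⟩ : Fin n)} := by
        ext x
        simp [Fin.ext_iff, h]
      rw [h1, h2]
      simp
      omega
    · have h2 : (univ.filter (fun i : Fin n => n % 3 = 1 ∧ i.val = n - 1))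
          = (∅ : Finset (Fin n)) := by
        ext x
        simp [h]
      rw [h1, h2]
      simp
      omega
  · rw [Finset.disjoint_filter]
    intro x _ hx ⟨hn1, hx1⟩
    omega

lemma goodSet_nonempty {n : ℕ} (hn : 1 ≤ n) : (goodSet n).Nonempty := by
  by_cases h : n % 3 = 1
  · exact ⟨⟨n - 1, by omega⟩, by rw [mem_goodSet]; right; exact ⟨h, rfl⟩⟩
  · exact ⟨⟨1, by omega⟩, by rw [mem_goodSet]; left; rfl⟩

lemma goodSet_ccd {n : ℕ} (hn : 1 ≤ n) : CCD (pathG n) (goodSet n) := by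
  constructor
  · intro x y hadj hx hy
    rw [mem_goodSet] at hx hy
    rw [pathG_adj] at hadj
    have hx' := x.isLt
    have hy' := y.isLt
    exfalso
    omega
  · intro u v hadj hu hv
    rw [mem_goodSet] at hu hv
    push_neg at hu hv
    rw [pathG_adj] at hadj
    have hu' := u.isLt
    have hv' := v.isLt
    -- in all cases, both sides are 1
    rcases hadj with hadj | hadj
    · -- u + 1 = v, so u % 3 = 2
      have hu2 : u.val % 3 = 2 := by omega
      have hvlt : v.val + 1 < n := by omega
      have e1 : (goodSet n).filter (fun x => (pathG n).Adj u x)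
          = {(⟨u.val - 1, by omega⟩ : Fin n)} := by
        ext x
        have hx := x.isLt
        simp only [Finset.mem_filter, Finset.mem_singleton, mem_goodSet, pathG_adj, Fin.ext_iff]
        omega
      have e2 : (goodSet n).filter (fun x => (pathG n).Adj v x)
          = {(⟨v.val + 1, hvlt⟩ : Fin n)} := by
        ext x
        have hx := x.isLt
        simp only [Finset.mem_filter, Finset.mem_singleton, mem_goodSet, pathG_adj, Fin.ext_iff]
        omega
      unfold nbrsIn
      rw [e1, e2]
      simp
    · -- v + 1 = u, so v % 3 = 2
      have hv2 : v.val % 3 = 2 := by omega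
      have hult : u.val + 1 < n := by omega
      have e1 : (goodSet n).filter (fun x => (pathG n).Adj u x)
          = {(⟨u.val + 1, hult⟩ : Fin n)} := by
        ext x
        have hx := x.isLt
        simp only [Finset.mem_filter, Finset.mem_singleton, mem_goodSet, pathG_adj, Fin.ext_iff]
        omega
      have e2 : (goodSet n).filter (fun x => (pathG n).Adj v x)
          = {(⟨v.val - 1, by omega⟩ : Fin n)} := by
        ext x
        have hx := x.isLt
        simp only [Finset.mem_filter, Finset.mem_singleton, mem_goodSet, pathG_adj, Fin.ext_iff]
        omega
      unfold nbrsIn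
      rw [e1, e2]
      simp

/-- A nonempty CCD set in the path dominates. -/
lemma ccd_dom {n : ℕ} {H : Finset (Fin n)} (hne : H.Nonempty)
    (hccd : CCD (pathG n) H) {v : Fin n} (hv : v ∉ H) : 1 ≤ nbrsIn (pathG n) H v := by
  by_contra hcon
  have h0 : nbrsIn (pathG n) H v = 0 := by omega
  have step : ∀ (w w' : Fin n), (pathG n).Adj w w' → w ∉ H → nbrsIn (pathG n) H w = 0 →
      w' ∉ H ∧ nbrsIn (pathG n) H w' = 0 := by
    intro w w' hadj hw hw0
    have hw' : w' ∉ H := by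
      intro hmem
      have hmem2 : w' ∈ H.filter (fun u => (pathG n).Adj w u) := by
        simp [hmem, hadj]
      have : 1 ≤ nbrsIn (pathG n) H w := Finset.card_pos.mpr ⟨w', hmem2⟩
      omega
    refine ⟨hw', ?_⟩
    rw [← hw0]
    exact hccd.2 w' w hadj.symm hw' hw
  have fwd : ∀ k (hk : v.val + k < n),
      (⟨v.val + k, hk⟩ : Fin n) ∉ H ∧ nbrsIn (pathG n) H ⟨v.val + k, hk⟩ = 0 := by
    intro k
    induction k with
    | zero =>
      intro hk
      have he : (⟨v.val + 0, hk⟩ : Fin n) = v := Fin.ext (by simp)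
      rw [he]
      exact ⟨hv, h0⟩
    | succ m ih =>
      intro hk
      have hm : v.val + m < n := by omega
      obtain ⟨h1, h2⟩ := ih hm
      exact step ⟨v.val + m, hm⟩ ⟨v.val + (m + 1), hk⟩
        ((pathG_adj _ _).mpr (Or.inl (show v.val + m + 1 = v.val + (m + 1) by omega))) h1 h2
  have bwd : ∀ k, k ≤ v.val →
      ∀ (hk : v.val - k < n),
      (⟨v.val - k, hk⟩ : Fin n) ∉ H ∧ nbrsIn (pathG n) H ⟨v.val - k, hk⟩ = 0 := by
    intro k
    induction k with
    | zero =>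
      intro _ hk
      have he : (⟨v.val - 0, hk⟩ : Fin n) = v := Fin.ext (by simp)
      rw [he]
      exact ⟨hv, h0⟩
    | succ m ih =>
      intro hle hk
      have hm : v.val - m < n := by omega
      obtain ⟨h1, h2⟩ := ih (by omega) hm
      exact step ⟨v.val - m, hm⟩ ⟨v.val - (m + 1), hk⟩
        ((pathG_adj _ _).mpr (Or.inr (show v.val - (m + 1) + 1 = v.val - m by omega))) h1 h2
  have hall : ∀ j : Fin n, j ∉ H := by
    intro j
    rcases le_or_gt v.val j.val with hle | hlt
    · have hk : v.val + (j.val - v.val) < n := by omega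
      have := (fwd (j.val - v.val) hk).1
      have he : (⟨v.val + (j.val - v.val), hk⟩ : Fin n) = j := Fin.ext (by simp; omega)
      rwa [he] at this
    · have hk : v.val - (v.val - j.val) < n := by omega
      have := (bwd (v.val - j.val) (by omega) hk).1
      have he : (⟨v.val - (v.val - j.val), hk⟩ : Fin n) = j := Fin.ext (by simp; omega)
      rwa [he] at this
  obtain ⟨x, hx⟩ := hne
  exact hall x hx

/-- A dominating set in the path has at least n/3 elements. -/
lemma dom_card {n : ℕ} {H : Finset (Fin n)}
    (hdom : ∀ v : Fin n, v ∈ H ∨ 1 ≤ nbrsIn (pathG n) H v) : n ≤ 3 * H.card := by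
  have hsub : (univ : Finset (Fin n)) ⊆
      H.biUnion (fun h => univ.filter (fun v => v = h ∨ (pathG n).Adj v h)) := by
    intro v _
    rw [Finset.mem_biUnion]
    rcases hdom v with hv | hv
    · exact ⟨v, hv, by simp⟩
    · have : (H.filter (fun u => (pathG n).Adj v u)).Nonempty :=
        Finset.card_pos.mp hv
      obtain ⟨h, hh⟩ := this
      rw [Finset.mem_filter] at hh
      exact ⟨h, hh.1, by simp [hh.2]⟩
  have hball : ∀ h : Fin n,
      (univ.filter (fun v : Fin n => v = h ∨ (pathG n).Adj v h)).card ≤ 3 := by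
    intro h
    calc (univ.filter (fun v : Fin n => v = h ∨ (pathG n).Adj v h)).card
        ≤ ({h.val - 1, h.val, h.val + 1} : Finset ℕ).card := by
          apply Finset.card_le_card_of_injOn (fun v => v.val)
          · intro v hvmem
            rw [Finset.mem_coe, Finset.mem_filter] at hvmem
            have hv2 := hvmem.2
            rw [Fin.ext_iff, pathG_adj] at hv2
            simp only [Finset.mem_coe, Finset.mem_insert, Finset.mem_singleton]
            omega
          · intro a _ b _ hab
            exact Fin.ext hab
      _ ≤ 3 := by
          apply le_trans (Finset.card_insert_le _ _)
          have := Finset.card_insert_le (h.val) ({h.val + 1} : Finset ℕ)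
          simp at this ⊢
  calc n = (univ : Finset (Fin n)).card := by simp
    _ ≤ (H.biUnion (fun h => univ.filter (fun v => v = h ∨ (pathG n).Adj v h))).card :=
        Finset.card_le_card hsub
    _ ≤ ∑ h ∈ H, (univ.filter (fun v : Fin n => v = h ∨ (pathG n).Adj v h)).card :=
        Finset.card_biUnion_le
    _ ≤ ∑ _h ∈ H, 3 := Finset.sum_le_sum (fun h _ => hball h)
    _ = 3 * H.card := by rw [Finset.sum_const]; ring

/-- The minimum size of a nonempty CCD subset of `P_n` is `⌈n/3⌉`. -/
theorem PQ2_path (n : ℕ) (hn : 1 ≤ n) :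
    IsLeast {k : ℕ | ∃ H : Finset (Fin n), H.Nonempty ∧ CCD (pathG n) H ∧ H.card = k}
      ((n + 2) / 3) := by
  constructor
  · exact ⟨goodSet n, goodSet_nonempty hn, goodSet_ccd hn, goodSet_card hn⟩
  · rintro k ⟨H, hne, hccd, rfl⟩
    have hdom : ∀ v : Fin n, v ∈ H ∨ 1 ≤ nbrsIn (pathG n) H v := by
      intro v
      by_cases hv : v ∈ H
      · exact Or.inl hv
      · exact Or.inr (ccd_dom hne hccd hv)
    have := dom_card hdom
    omega
end

section
/- For the path P_n with n ≥ 1, the set of vertices v_i with i ≡ 2 (mod 3), together with v_n when n ≡ 1 (mod 3), is a CCD subset of V(P_n) of size ⌈n/3⌉. -/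
open Finset

variable {V : Type*} [Fintype V] [DecidableEq V]

lemma aux_range (n : ℕ) :
    ((Finset.range n).filter (fun i => i % 3 = 1)).card = (n + 1) / 3 := by
  induction n with
  | zero => simp
  | succ n ih =>
    rw [Finset.range_add_one, Finset.filter_insert]
    split_ifs with h
    · rw [Finset.card_insert_of_notMem (by simp), ih]; omega
    · rw [ih]; omega

lemma aux_key (n : ℕ) (u v : Fin n) (h : u.val + 1 = v.val)
    (hu : ¬(u.val % 3 = 1 ∨ (n % 3 = 1 ∧ u.val = n - 1)))
    (hv : ¬(v.val % 3 = 1 ∨ (n % 3 = 1 ∧ v.val = n - 1))) :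
    nbrsIn (pathG n)
      (Finset.univ.filter (fun i : Fin n => i.val % 3 = 1 ∨ (n % 3 = 1 ∧ i.val = n - 1))) u
    = nbrsIn (pathG n)
      (Finset.univ.filter (fun i : Fin n => i.val % 3 = 1 ∨ (n % 3 = 1 ∧ i.val = n - 1))) v := by
  have hun := u.isLt
  have hvn := v.isLt
  push_neg at hu hv
  have hu2 : u.val % 3 = 2 := by omega
  have hvlt : v.val + 1 < n := by omega
  have h1 : (Finset.univ.filter (fun i : Fin n => i.val % 3 = 1 ∨ (n % 3 = 1 ∧ i.val = n - 1))).filter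
      (fun w => (pathG n).Adj u w) = {(⟨u.val - 1, by omega⟩ : Fin n)} := by
    ext i
    rw [Finset.mem_filter, Finset.mem_filter]
    simp only [Finset.mem_filter, Finset.mem_univ, true_and, Finset.mem_singleton, Fin.ext_iff,
      pathG]
    omega
  have h2 : (Finset.univ.filter (fun i : Fin n => i.val % 3 = 1 ∨ (n % 3 = 1 ∧ i.val = n - 1))).filter
      (fun w => (pathG n).Adj v w) = {(⟨v.val + 1, hvlt⟩ : Fin n)} := by
    ext i
    rw [Finset.mem_filter, Finset.mem_filter]
    simp only [Finset.mem_filter, Finset.mem_univ, true_and, Finset.mem_singleton, Fin.ext_iff,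
      pathG]
    omega
  simp [nbrsIn, h1, h2]

/-- The set of vertices `v_i` with `i ≡ 2 (mod 3)` (indices `≡ 1 (mod 3)` from 0),
together with the last vertex when `n ≡ 1 (mod 3)`, is a CCD subset of `P_n` of
size `⌈n/3⌉`. -/
theorem path_standard_CCD (n : ℕ) (hn : 1 ≤ n) :
    CCD (pathG n)
      (Finset.univ.filter (fun i : Fin n => i.val % 3 = 1 ∨ (n % 3 = 1 ∧ i.val = n - 1))) ∧
    (Finset.univ.filter
      (fun i : Fin n => i.val % 3 = 1 ∨ (n % 3 = 1 ∧ i.val = n - 1))).card = (n + 2) / 3 := by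
  constructor
  · constructor
    · intro x y hxy hx hy
      exfalso
      have hxn := x.isLt
      have hyn := y.isLt
      simp only [Finset.mem_filter, Finset.mem_univ, true_and] at hx hy
      have hadj : x.val + 1 = y.val ∨ y.val + 1 = x.val := hxy
      omega
    · intro u v huv hu hv
      simp only [Finset.mem_filter, Finset.mem_univ, true_and] at hu hv
      rcases (huv : u.val + 1 = v.val ∨ v.val + 1 = u.val) with h | h
      · exact aux_key n u v h hu hv
      · exact (aux_key n v u h hv hu).symm
  · have hcount : ((Finset.univ : Finset (Fin n)).filter (fun i => i.val % 3 = 1)).card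
        = (n + 1) / 3 := by
      rw [← aux_range n, Finset.card_filter, Finset.card_filter,
        Fin.sum_univ_eq_sum_range (fun i => if i % 3 = 1 then 1 else 0)]
    by_cases hmod : n % 3 = 1
    · have hsplit : (Finset.univ.filter
          (fun i : Fin n => i.val % 3 = 1 ∨ (n % 3 = 1 ∧ i.val = n - 1)))
          = (Finset.univ.filter (fun i : Fin n => i.val % 3 = 1)) ∪
            {(⟨n - 1, by omega⟩ : Fin n)} := by
        ext i
        have := i.isLt
        simp only [Finset.mem_filter, Finset.mem_univ, true_and, Finset.mem_union,
          Finset.mem_singleton, Fin.ext_iff]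
        omega
      have hdisj : Disjoint ((Finset.univ : Finset (Fin n)).filter (fun i => i.val % 3 = 1))
          {(⟨n - 1, by omega⟩ : Fin n)} := by
        simp only [Finset.disjoint_singleton_right, Finset.mem_filter]
        intro ⟨_, h⟩
        omega
      rw [hsplit, Finset.card_union_of_disjoint hdisj, hcount, Finset.card_singleton]
      omega
    · have hsplit : (Finset.univ.filter
          (fun i : Fin n => i.val % 3 = 1 ∨ (n % 3 = 1 ∧ i.val = n - 1)))
          = (Finset.univ.filter (fun i : Fin n => i.val % 3 = 1)) := by
        ext i
        simp only [Finset.mem_filter, Finset.mem_univ, true_and]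
        omega
      rw [hsplit, hcount]
      omega
end
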